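/- If p : Fin n × Fin n → ℝ is a doubly stochastic matrix (all entries nonnegative, every row sums to 1, every column sums to 1), then there exists a permutation σ of Fin n such that for every i, p (i, σ i) ≥ 1/n². -/
import Mathlib

/-- If `p` is a doubly stochastic matrix, there is a permutation `σ` with
`p (i, σ i) ≥ 1/n²` for every `i`. -/
theorem stmt0 (n : ℕ) (p : Fin n × Fin n → ℝ)
    (hnn : ∀ ij, 0 ≤ p ij)
    (hrow : ∀ i : Fin n, ∑ j, p (i, j) = 1)
    (hcol : ∀ j : Fin n, ∑ i, p (i, j) = 1) :
    ∃ σ : Equiv.Perm (Fin n), ∀ i, p (i, σ i) ≥ 1 / (n : ℝ) ^ 2 := by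
  classical
  rcases Nat.eq_zero_or_pos n with hn | hn
  · subst hn; exact ⟨1, fun i => i.elim0⟩
  have hnR : (0 : ℝ) < n := by exact_mod_cast hn
  set c : ℝ := 1 / (n : ℝ) ^ 2 with hc
  have hcpos : 0 < c := by positivity
  set t : Fin n → Finset (Fin n) :=
    fun i => Finset.univ.filter (fun j => c ≤ p (i, j)) with ht
  have hall : ∀ S : Finset (Fin n), S.card ≤ (S.biUnion t).card := by
    intro S
    set N := S.biUnion t with hN
    by_cases hNc : Nᶜ = (∅ : Finset (Fin n))
    · have hNu : N = Finset.univ := by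
        have := congrArg (·ᶜ) hNc
        simpa using this
      rw [hNu]
      simpa using Finset.card_le_univ S
    · by_cases hS : S = ∅
      · simp [hS]
      have hSne : S.Nonempty := Finset.nonempty_iff_ne_empty.mpr hS
      have hNcne : (Nᶜ : Finset (Fin n)).Nonempty := Finset.nonempty_iff_ne_empty.mpr hNc
      have key : (S.card : ℝ) < N.card + 1 := by
        have h1 : (S.card : ℝ) = ∑ i ∈ S, ∑ j, p (i, j) := by
          simp [hrow]
        have hsplit : ∀ i, ∑ j, p (i, j) = ∑ j ∈ N, p (i, j) + ∑ j ∈ Nᶜ, p (i, j) :=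
          fun i => (Finset.sum_add_sum_compl N _).symm
        have hA : ∑ i ∈ S, ∑ j ∈ N, p (i, j) ≤ (N.card : ℝ) := by
          rw [Finset.sum_comm]
          calc ∑ j ∈ N, ∑ i ∈ S, p (i, j)
              ≤ ∑ j ∈ N, ∑ i, p (i, j) := by
                apply Finset.sum_le_sum
                intro j _
                exact Finset.sum_le_sum_of_subset_of_nonneg (Finset.subset_univ S)
                  (fun i _ _ => hnn _)
            _ = (N.card : ℝ) := by simp [hcol]
        have hX : ∑ i ∈ S, ∑ j ∈ Nᶜ, p (i, j) < 1 := by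
          have hlt : ∀ i ∈ S, ∀ j ∈ (Nᶜ : Finset (Fin n)), p (i, j) < c := by
            intro i hi j hj
            by_contra hge
            push_neg at hge
            have : j ∈ N := Finset.mem_biUnion.mpr ⟨i, hi, by
              simp [ht, hge]⟩
            exact (Finset.mem_compl.mp hj) this
          have h2 : ∑ i ∈ S, ∑ j ∈ Nᶜ, p (i, j) < ∑ i ∈ S, ∑ j ∈ (Nᶜ : Finset (Fin n)), c := by
            apply Finset.sum_lt_sum_of_nonempty hSne
            intro i hi
            apply Finset.sum_lt_sum_of_nonempty hNcne
            intro j hj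
            exact hlt i hi j hj
          have h3 : ∑ i ∈ S, ∑ j ∈ (Nᶜ : Finset (Fin n)), c
              = (S.card : ℝ) * (Nᶜ : Finset (Fin n)).card * c := by
            simp [Finset.sum_const, nsmul_eq_mul, mul_assoc]
          have h4 : (S.card : ℝ) * (Nᶜ : Finset (Fin n)).card * c ≤ 1 := by
            have hs : (S.card : ℝ) ≤ n := by
              exact_mod_cast Finset.card_le_univ S |>.trans_eq (by simp)
            have hnc : ((Nᶜ : Finset (Fin n)).card : ℝ) ≤ n := by
              exact_mod_cast Finset.card_le_univ _ |>.trans_eq (by simp)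
            have : (S.card : ℝ) * (Nᶜ : Finset (Fin n)).card ≤ (n : ℝ) ^ 2 := by
              calc (S.card : ℝ) * (Nᶜ : Finset (Fin n)).card ≤ (n : ℝ) * n :=
                    mul_le_mul hs hnc (by positivity) (le_of_lt hnR)
                _ = (n : ℝ) ^ 2 := (sq (n : ℝ)).symm
            calc (S.card : ℝ) * (Nᶜ : Finset (Fin n)).card * c
                ≤ (n : ℝ) ^ 2 * c := by
                  apply mul_le_mul_of_nonneg_right this (le_of_lt hcpos)
              _ = 1 := by
                  rw [hc]; field_simp
          linarith [h2, h3 ▸ h4]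
        calc (S.card : ℝ) = ∑ i ∈ S, ∑ j, p (i, j) := h1
          _ = ∑ i ∈ S, (∑ j ∈ N, p (i, j) + ∑ j ∈ Nᶜ, p (i, j)) := by
              simp_rw [hsplit]
          _ = (∑ i ∈ S, ∑ j ∈ N, p (i, j)) + ∑ i ∈ S, ∑ j ∈ Nᶜ, p (i, j) := by
              rw [Finset.sum_add_distrib]
          _ < (N.card : ℝ) + 1 := by linarith
      have : S.card < N.card + 1 := by exact_mod_cast key
      omega
  obtain ⟨f, hfinj, hft⟩ := (Finset.all_card_le_biUnion_card_iff_exists_injective t).mp hall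
  refine ⟨Equiv.ofBijective f (Finite.injective_iff_bijective.mp hfinj), fun i => ?_⟩
  have := hft i
  simp only [ht, Finset.mem_filter] at this
  exact this.2
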